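/- There exist free ultrafilters p, q on ℕ and subspaces X, Y of βℕ such that X is p-compact, Y is sequentially q-compact, and X × Y is not pseudocompact. Specifically, one can take X a minimal p-compact subspace of βℕ containing ℕ (which has cardinality ≤ 2^ℵ₀) and Y = ℕ ∪ (βℕ \ X). -/

import Mathlib

open Set Filter Topology Function

/-- A free ultrafilter on ℕ: one containing no singleton. -/
def FreeUF (p : Ultrafilter ℕ) : Prop := ∀ n : ℕ, ({n} : Set ℕ) ∉ p

/-- `l` is the `p`-limit of the sequence `x`. -/
def PLim {X : Type*} [TopologicalSpace X] (p : Ultrafilter ℕ) (x : ℕ → X) (l : X) : Prop :=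
  Filter.Tendsto x (p : Filter ℕ) (nhds l)

/-- A βω-space: the closure of any countably infinite discrete subset with compact closure
is homeomorphic to βℕ. -/
def BetaOmegaSpace (X : Type*) [TopologicalSpace X] : Prop :=
  ∀ M : Set X, M.Countable → M.Infinite → DiscreteTopology M → IsCompact (closure M) →
    Nonempty (closure M ≃ₜ StoneCech ℕ)

/-- Keisler–Rudin (Rudin–Keisler) order on ultrafilters on ℕ. -/
def RKle (p q : Ultrafilter ℕ) : Prop := ∃ f : ℕ → ℕ, Ultrafilter.map f q = p

/-- A homogeneous space. -/
def Homogeneous (X : Type*) [TopologicalSpace X] : Prop :=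
  ∀ x y : X, ∃ h : X ≃ₜ X, h x = y

/-- Pseudocompactness: every continuous real-valued function is bounded. -/
def Pseudocompact (Y : Type*) [TopologicalSpace Y] : Prop :=
  ∀ f : Y → ℝ, Continuous f → ∃ C : ℝ, ∀ y, |f y| ≤ C

/-- `p`-compactness: every sequence has a `p`-limit. -/
def PCompact (p : Ultrafilter ℕ) (X : Type*) [TopologicalSpace X] : Prop :=
  ∀ x : ℕ → X, ∃ l : X, PLim p x l

/-- Sequential `q`-compactness. -/
def SeqPCompact (p : Ultrafilter ℕ) (X : Type*) [TopologicalSpace X] : Prop :=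
  ∀ M : Set X, M.Infinite → ∃ L : Set X, L ⊆ M ∧ L.Infinite ∧
    ∀ x : ℕ → X, Function.Injective x → (∀ n, x n ∈ L) → ∃ l : X, PLim p x l

noncomputable section Aux

abbrev UF := Ultrafilter ℕ

/-- Rudin–Keisler: `u ≤ v`. -/
def rkle (u v : UF) : Prop := ∃ f : ℕ → ℕ, Ultrafilter.map f v = u

lemma rkle_refl (u : UF) : rkle u u := ⟨id, Ultrafilter.map_id u⟩

lemma rkle_trans {u v w : UF} (h1 : rkle u v) (h2 : rkle v w) : rkle u w := by
  obtain ⟨f, rfl⟩ := h1; obtain ⟨g, rfl⟩ := h2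
  exact ⟨f ∘ g, (Ultrafilter.map_map w g f)⟩

lemma rkle_pure (n : ℕ) (u : UF) : rkle (pure n) u := by
  refine ⟨fun _ => n, Ultrafilter.ext fun s => ?_⟩
  by_cases h : n ∈ s
  · simp only [Ultrafilter.mem_map, Ultrafilter.mem_pure, h, iff_true]
    have : (fun _ : ℕ => n) ⁻¹' s = Set.univ := by ext m; simp [h]
    rw [this]; exact Filter.univ_mem
  · simp only [Ultrafilter.mem_map, Ultrafilter.mem_pure, h, iff_false]
    have : (fun _ : ℕ => n) ⁻¹' s = ∅ := by ext m; simp [h]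
    rw [this]; exact Ultrafilter.empty_notMem

def e2 : ℕ × ℕ ≃ ℕ := Denumerable.eqv (ℕ × ℕ)

/-- `p`-indexed sum of ultrafilters, transported to `ℕ` via `e2`. -/
def psum (r : UF) (Q : ℕ → UF) : UF := r.bind fun n => (Q n).map fun m => e2 (n, m)

lemma mem_psum {A : Set ℕ} {r : UF} {Q : ℕ → UF} :
    A ∈ psum r Q ↔ {n | {m | e2 (n, m) ∈ A} ∈ Q n} ∈ r := by
  rfl

def tensor (u v : UF) : UF := psum u fun _ => v

lemma map_tensor_fst (u v : UF) :
    Ultrafilter.map (fun j => (e2.symm j).1) (tensor u v) = u := by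
  refine Ultrafilter.ext fun s => ?_
  show (fun j => (e2.symm j).1) ⁻¹' s ∈ tensor u v ↔ s ∈ u
  rw [tensor, mem_psum]
  have : {n | {m | (e2.symm (e2 (n, m))).1 ∈ s} ∈ v} = s := by
    ext n
    by_cases h : n ∈ s
    · simp only [Set.mem_setOf_eq, Equiv.symm_apply_apply, h, Set.setOf_true]
      simp only [Set.mem_setOf_eq, h, iff_true]
      exact Filter.univ_mem
    · simp only [Set.mem_setOf_eq, Equiv.symm_apply_apply, h, Set.setOf_false]
      simp only [Set.mem_setOf_eq, h, iff_false]
      exact Ultrafilter.empty_notMem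
  exact by rw [show {n | {m | e2 (n,m) ∈ (fun j => (e2.symm j).1) ⁻¹' s} ∈ v} = s from this]

lemma map_tensor_snd (u v : UF) :
    Ultrafilter.map (fun j => (e2.symm j).2) (tensor u v) = v := by
  refine Ultrafilter.ext fun s => ?_
  show (fun j => (e2.symm j).2) ⁻¹' s ∈ tensor u v ↔ s ∈ v
  rw [tensor, mem_psum]
  have : {n : ℕ | {m | (e2.symm (e2 (n, m))).2 ∈ s} ∈ v} = {n : ℕ | s ∈ v} := by
    ext n; simp
  rw [show {n | {m | e2 (n,m) ∈ (fun j => (e2.symm j).2) ⁻¹' s} ∈ v} = {n : ℕ | s ∈ v} from this]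
  by_cases h : s ∈ v
  · simp only [h, Set.setOf_true, iff_true]
    exact Filter.univ_mem
  · simp only [h, Set.setOf_false, iff_false]
    exact Ultrafilter.empty_notMem

lemma rkle_tensor_left (u v : UF) : rkle u (tensor u v) := ⟨_, map_tensor_fst u v⟩
lemma rkle_tensor_right (u v : UF) : rkle v (tensor u v) := ⟨_, map_tensor_snd u v⟩

lemma tensor_mono_right (u : UF) {v v' : UF} (h : rkle v' v) :
    rkle (tensor u v') (tensor u v) := by
  obtain ⟨f, rfl⟩ := h
  refine ⟨fun j => e2 ((e2.symm j).1, f (e2.symm j).2), Ultrafilter.ext fun s => ?_⟩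
  show (fun j => e2 ((e2.symm j).1, f (e2.symm j).2)) ⁻¹' s ∈ tensor u v ↔ s ∈ tensor u (Ultrafilter.map f v)
  rw [tensor, mem_psum, tensor, mem_psum]
  apply iff_of_eq; congr 1
  ext n
  simp [Ultrafilter.mem_map, Set.preimage]

lemma rkle_bind_tensor (p P : UF) (x : ℕ → UF) (h : ∀ n, rkle (x n) P) :
    rkle (p.bind x) (tensor p P) := by
  choose f hf using h
  refine ⟨fun j => f (e2.symm j).1 (e2.symm j).2, Ultrafilter.ext fun s => ?_⟩
  show (fun j => f (e2.symm j).1 (e2.symm j).2) ⁻¹' s ∈ tensor p P ↔ s ∈ p.bind x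
  rw [tensor, mem_psum]
  have : {n | {m | f (e2.symm (e2 (n,m))).1 (e2.symm (e2 (n,m))).2 ∈ s} ∈ P}
      = {n | s ∈ x n} := by
    ext n
    simp only [Set.mem_setOf_eq, Equiv.symm_apply_apply, ← hf n]
    rfl
  rw [show {n | {m | e2 (n,m) ∈ (fun j => f (e2.symm j).1 (e2.symm j).2) ⁻¹' s} ∈ P} = {n | s ∈ x n} from this]
  rfl

end Aux

noncomputable section Aux2

open Ultrafilter

lemma free_compl_finite_mem {r : UF} (hr : ∀ n : ℕ, ({n} : Set ℕ) ∉ r)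
    {s : Set ℕ} (hs : s.Finite) : sᶜ ∈ r := by
  rw [Ultrafilter.compl_mem_iff_notMem]
  intro h
  obtain ⟨x, _, hx⟩ := Ultrafilter.eq_pure_of_finite_mem hs h
  exact hr x (by rw [hx]; exact Ultrafilter.mem_pure.2 rfl)

lemma hyper_free : ∀ n : ℕ, ({n} : Set ℕ) ∉ (Filter.hyperfilter ℕ : Ultrafilter ℕ) :=
  fun n => Filter.notMem_hyperfilter_of_finite (Set.finite_singleton n)

/-- iterated composition of the chain witnesses -/
def chainComp (g : ℕ → ℕ → ℕ) (k : ℕ) : ℕ → ℕ → ℕ := fun d =>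
  Nat.rec (motive := fun _ => ℕ → ℕ) id (fun d' G => G ∘ g (k + d')) d

lemma chainComp_spec (g : ℕ → ℕ → ℕ) (Q : ℕ → UF)
    (hg : ∀ k, Ultrafilter.map (g k) (Q (k + 1)) = Q k) (k : ℕ) :
    ∀ d, Ultrafilter.map (chainComp g k d) (Q (k + d)) = Q k := by
  intro d
  induction d with
  | zero => exact Ultrafilter.map_id _
  | succ d ih =>
    have : chainComp g k (d+1) = chainComp g k d ∘ g (k + d) := rfl
    have h2 : Ultrafilter.map (g (k+d)) (Q (k + (d+1))) = Q (k+d) := hg (k+d)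
    rw [this, ← Ultrafilter.map_map, h2]
    exact ih

lemma rkle_psum_of_chain {r : UF} (hr : ∀ n : ℕ, ({n} : Set ℕ) ∉ r) (Q : ℕ → UF)
    (g : ℕ → ℕ → ℕ) (hg : ∀ k, Ultrafilter.map (g k) (Q (k + 1)) = Q k) (k : ℕ) :
    rkle (Q k) (psum r Q) := by
  refine ⟨fun j => if k ≤ (e2.symm j).1 then chainComp g k ((e2.symm j).1 - k) (e2.symm j).2 else 0, ?_⟩
  set F : ℕ → ℕ := fun j => if k ≤ (e2.symm j).1 then chainComp g k ((e2.symm j).1 - k) (e2.symm j).2 else 0 with hF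
  have key : ∀ A ∈ Q k, A ∈ Ultrafilter.map F (psum r Q) := by
    intro A hA
    show F ⁻¹' A ∈ psum r Q
    rw [mem_psum]
    have hsub : {n : ℕ | k ≤ n} ⊆ {n | {m | e2 (n, m) ∈ F ⁻¹' A} ∈ Q n} := by
      intro n hn
      have hn' : k ≤ n := hn
      have hd : {m | e2 (n, m) ∈ F ⁻¹' A} = chainComp g k (n - k) ⁻¹' A := by
        ext m
        simp only [Set.mem_setOf_eq, Set.mem_preimage, hF, Equiv.symm_apply_apply, if_pos hn']
      rw [Set.mem_setOf_eq, hd]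
      have := chainComp_spec g Q hg k (n - k)
      rw [Nat.add_sub_cancel' hn] at this
      rw [show chainComp g k (n-k) ⁻¹' A ∈ Q n ↔ A ∈ Ultrafilter.map (chainComp g k (n-k)) (Q n) from Iff.rfl, this]
      exact hA
    refine Filter.mem_of_superset ?_ hsub
    have : {n : ℕ | k ≤ n} = {n : ℕ | n < k}ᶜ := by ext n; simp [not_lt]
    rw [this]
    exact free_compl_finite_mem hr (Set.finite_Iio k)
  have : (Ultrafilter.map F (psum r Q) : Filter ℕ) ≤ (Q k : Filter ℕ) := fun A hA => key A hA
  exact (Ultrafilter.coe_le_coe.1 this)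

/-- upper bound chain for a sequence of ultrafilters -/
def cubQ (fam : ℕ → UF) : ℕ → UF := fun k =>
  Nat.rec (fam 0) (fun k' Qk => tensor Qk (fam (k' + 1))) k

def cub (fam : ℕ → UF) : UF := psum (Filter.hyperfilter ℕ) (cubQ fam)

lemma rkle_cubQ (fam : ℕ → UF) (k : ℕ) : rkle (fam k) (cubQ fam k) := by
  cases k with
  | zero => exact rkle_refl _
  | succ k => exact rkle_tensor_right _ _

lemma rkle_cub (fam : ℕ → UF) (i : ℕ) : rkle (fam i) (cub fam) := by
  refine rkle_trans (rkle_cubQ fam i) ?_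
  exact rkle_psum_of_chain hyper_free (cubQ fam) (fun _ j => (e2.symm j).1)
    (fun k => map_tensor_fst _ _) i

end Aux2

noncomputable section Aux3

open Ultrafilter Ordinal Cardinal

def om1 : Ordinal.{0} := (Cardinal.aleph 1).ord

def pick (α : Ordinal.{0}) (n : ℕ) : Ordinal.{0} :=
  @dite _ (∃ σ : ℕ → ↥(Set.Iio α), Surjective σ) (Classical.dec _)
    (fun h => ((h.choose n : ↥(Set.Iio α)) : Ordinal)) (fun _ => 0)

lemma pick_lt {α : Ordinal.{0}} (h0 : α ≠ 0) (n : ℕ) : pick α n < α := by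
  unfold pick
  split_ifs with h
  · exact (h.choose n).2
  · exact pos_iff_ne_zero.2 h0

lemma pick_surj {α : Ordinal.{0}} (hα : α < om1) {β : Ordinal} (hβ : β < α) :
    ∃ n, pick α n = β := by
  have hcard : α.card < Cardinal.aleph 1 := Cardinal.lt_ord.1 hα
  have hle : α.card ≤ Cardinal.aleph0 := by
    rwa [← Cardinal.succ_aleph0, Order.lt_succ_iff] at hcard
  have hcnt : Countable α.ToType := by
    rw [← Cardinal.mk_le_aleph0_iff, Cardinal.mk_toType]; exact hle
  have hne : Nonempty α.ToType := Ordinal.nonempty_toType_iff.2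
    (by rintro rfl; exact absurd hβ (not_lt_zero' (a := β)))
  obtain ⟨f, hf⟩ := exists_surjective_nat α.ToType
  have hex : ∃ σ : ℕ → ↥(Set.Iio α), Surjective σ :=
    ⟨fun n => (Ordinal.ToType.mk (o := α)).symm (f n), fun y => by
      obtain ⟨n, hn⟩ := hf ((Ordinal.ToType.mk (o := α)) y)
      exact ⟨n, by show (Ordinal.ToType.mk (o := α)).symm (f n) = y; rw [hn]; simp⟩⟩
  obtain ⟨n, hn⟩ := hex.choose_spec ⟨β, hβ⟩
  refine ⟨n, ?_⟩
  unfold pick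
  rw [dif_pos hex, hn]

def Pfam : Ordinal.{0} → UF :=
  Ordinal.lt_wf.fix fun α IH =>
    if h0 : α = 0 then (Filter.hyperfilter ℕ : UF)
    else tensor (Filter.hyperfilter ℕ) (cub fun n => IH (pick α n) (pick_lt h0 n))

lemma Pfam_eq (α : Ordinal.{0}) : Pfam α =
    if h0 : α = 0 then (Filter.hyperfilter ℕ : UF)
    else tensor (Filter.hyperfilter ℕ) (cub fun n => Pfam (pick α n)) := by
  show Ordinal.lt_wf.fix _ α = _
  rw [WellFounded.fix_eq]
  rfl

lemma Pfam_mono {α β : Ordinal.{0}} (hα : α < om1) (hβ : β < α) : rkle (Pfam β) (Pfam α) := by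
  have h0 : α ≠ 0 := fun h => absurd hβ (h ▸ not_lt_zero' (a := β))
  obtain ⟨n, hn⟩ := pick_surj hα hβ
  rw [Pfam_eq α, dif_neg h0]
  refine rkle_trans ?_ (rkle_tensor_right _ _)
  have := rkle_cub (fun n => Pfam (pick α n)) n
  rwa [hn] at this

def Xset : Set UF := {v | ∃ α, α < om1 ∧ rkle v (Pfam α)}

lemma om1_isLimit : Order.IsSuccLimit om1 := Cardinal.isSuccLimit_ord Cardinal.aleph0_lt_aleph_one.le

lemma pure_mem_Xset (n : ℕ) : (pure n : UF) ∈ Xset :=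
  ⟨0, om1_isLimit.pos, rkle_pure n _⟩

lemma bind_mem_Xset (x : ℕ → UF) (hx : ∀ n, x n ∈ Xset) :
    (Filter.hyperfilter ℕ : UF).bind x ∈ Xset := by
  choose α hα hr using hx
  have hsup : iSup α < om1 :=
    Cardinal.iSup_lt_ord_of_isRegular Cardinal.isRegular_aleph_one
      (by rw [Cardinal.mk_nat]; exact Cardinal.aleph0_lt_aleph_one) hα
  set γ := Order.succ (iSup α) with hγdef
  have hγ : γ < om1 := om1_isLimit.succ_lt hsup
  have hγ1 : Order.succ γ < om1 := om1_isLimit.succ_lt hγ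
  have hxr : ∀ n, rkle (x n) (Pfam γ) := fun n =>
    rkle_trans (hr n)
      (Pfam_mono hγ (lt_of_le_of_lt (Ordinal.le_iSup α n) (Order.lt_succ _)))
  have h1 : rkle ((Filter.hyperfilter ℕ : UF).bind x) (tensor (Filter.hyperfilter ℕ) (Pfam γ)) :=
    rkle_bind_tensor _ _ x hxr
  have h2 : rkle (tensor (Filter.hyperfilter ℕ) (Pfam γ)) (Pfam (Order.succ γ)) := by
    rw [Pfam_eq (Order.succ γ), dif_neg (Ordinal.succ_ne_zero γ)]
    apply tensor_mono_right
    obtain ⟨n, hn⟩ := pick_surj hγ1 (Order.lt_succ γ)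
    have := rkle_cub (fun n => Pfam (pick (Order.succ γ) n)) n
    rwa [hn] at this
  exact ⟨Order.succ γ, hγ1, rkle_trans h1 h2⟩

end Aux3

noncomputable section Aux4

lemma joinM_map_eq (q : UF) (w : ℕ → UF) : joinM (Ultrafilter.map w q) = q.bind w :=
  Ultrafilter.ext fun _ => Iff.rfl

lemma tendsto_bind_nhds (q : UF) (w : ℕ → UF) :
    Filter.Tendsto w (q : Filter ℕ) (nhds (q.bind w)) := by
  rw [Filter.Tendsto, ← Ultrafilter.coe_map, ultrafilter_converges_iff]
  exact (joinM_map_eq q w).symm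

/-- one step of the disjointification recursion -/
lemma disj_step (T : Set UF) (E : Set ℕ) (hT : T.Infinite) (hE : ∀ w ∈ T, E ∈ w) :
    ∃ (v : UF) (T' : Set UF) (E' : Set ℕ) (A : Set ℕ),
      v ∈ T ∧ T' ⊆ T ∧ T'.Infinite ∧ v ∉ T' ∧ (∀ w ∈ T', E' ∈ w) ∧
      A ∈ v ∧ A ⊆ E ∧ E' ⊆ E ∧ A ∩ E' = ∅ := by
  obtain ⟨a, ha, b, hb, hab⟩ := hT.nontrivial
  have hsep : ∃ B : Set ℕ, B ∈ a ∧ B ∉ b := by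
    by_contra h
    push_neg at h
    have : (b : Filter ℕ) ≤ (a : Filter ℕ) := fun s hs => h s hs
    exact hab (Ultrafilter.coe_le_coe.1 this).symm
  obtain ⟨B, hBa, hBb⟩ := hsep
  have hBb' : Bᶜ ∈ b := Ultrafilter.compl_mem_iff_notMem.2 hBb
  by_cases hcase : ({w ∈ T | B ∉ w}).Infinite
  · refine ⟨a, {w ∈ T | B ∉ w} \ {a}, E ∩ Bᶜ, E ∩ B, ha, ?_, ?_, ?_, ?_, ?_, ?_, ?_, ?_⟩
    · exact fun w hw => (hw.1).1
    · exact hcase.diff (Set.finite_singleton a)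
    · intro h; exact h.2 rfl
    · intro w hw
      exact Filter.inter_mem (hE w hw.1.1) (Ultrafilter.compl_mem_iff_notMem.2 hw.1.2)
    · exact Filter.inter_mem (hE a ha) hBa
    · exact Set.inter_subset_left
    · exact Set.inter_subset_left
    · ext j; simp only [Set.mem_inter_iff, Set.mem_empty_iff_false, iff_false]
      rintro ⟨⟨_, hj1⟩, ⟨_, hj2⟩⟩; exact hj2 hj1
  · have hT1 : ({w ∈ T | B ∈ w}).Infinite := by
      have : T ⊆ {w ∈ T | B ∈ w} ∪ {w ∈ T | B ∉ w} := by
        intro w hw; by_cases h : B ∈ w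
        · exact Or.inl ⟨hw, h⟩
        · exact Or.inr ⟨hw, h⟩
      have hfin : ({w ∈ T | B ∉ w}).Finite := Set.not_infinite.1 hcase
      by_contra hc
      have hfin2 : ({w ∈ T | B ∈ w}).Finite := Set.not_infinite.1 hc
      exact hT (((hfin2.union hfin).subset this))
    refine ⟨b, {w ∈ T | B ∈ w} \ {b}, E ∩ B, E ∩ Bᶜ, hb, ?_, ?_, ?_, ?_, ?_, ?_, ?_, ?_⟩
    · exact fun w hw => (hw.1).1
    · exact hT1.diff (Set.finite_singleton b)
    · intro h; exact h.2 rfl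
    · intro w hw
      exact Filter.inter_mem (hE w hw.1.1) hw.1.2
    · exact Filter.inter_mem (hE b hb) hBb'
    · exact Set.inter_subset_left
    · exact Set.inter_subset_left
    · ext j; simp only [Set.mem_inter_iff, Set.mem_empty_iff_false, iff_false]
      rintro ⟨⟨_, hj1⟩, ⟨_, hj2⟩⟩; exact hj1 hj2

structure DState (M : Set UF) where
  T : Set UF
  E : Set ℕ
  hT : T.Infinite
  hTM : T ⊆ M
  hE : ∀ w ∈ T, E ∈ w

lemma dstate_step {M : Set UF} (st : DState M) :
    ∃ (r : UF × Set ℕ × DState M),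
      r.1 ∈ st.T ∧ r.2.2.T ⊆ st.T ∧ r.1 ∉ r.2.2.T ∧ r.2.1 ∈ r.1 ∧
      r.2.1 ⊆ st.E ∧ r.2.2.E ⊆ st.E ∧ r.2.1 ∩ r.2.2.E = ∅ := by
  obtain ⟨v, T', E', A, hv, hT'T, hT'inf, hvT', hE', hAv, hAE, hE'E, hAE'⟩ :=
    disj_step st.T st.E st.hT st.hE
  exact ⟨⟨v, A, ⟨T', E', hT'inf, hT'T.trans st.hTM, hE'⟩⟩, hv, hT'T, hvT', hAv, hAE, hE'E, hAE'⟩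

lemma disjointify {M : Set UF} (hM : M.Infinite) :
    ∃ (u : ℕ → UF) (A : ℕ → Set ℕ), Function.Injective u ∧ (∀ k, u k ∈ M) ∧
      (∀ k, A k ∈ u k) ∧ ∀ j k, j ≠ k → A j ∩ A k = ∅ := by
  classical
  let st0 : DState M := ⟨M, Set.univ, hM, le_refl M, fun w _ => Filter.univ_mem⟩
  let S : ℕ → DState M := fun k => Nat.rec st0 (fun _ s => (dstate_step s).choose.2.2) k
  have hSsucc : ∀ k, S (k+1) = (dstate_step (S k)).choose.2.2 := fun k => rfl
  let u : ℕ → UF := fun k => (dstate_step (S k)).choose.1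
  let A : ℕ → Set ℕ := fun k => (dstate_step (S k)).choose.2.1
  have spec := fun k => (dstate_step (S k)).choose_spec
  -- T chain
  have hTchain : ∀ j k, j ≤ k → (S k).T ⊆ (S j).T := by
    intro j k hjk
    induction k with
    | zero => cases Nat.le_zero.1 hjk; exact le_refl _
    | succ k ih =>
      rcases Nat.lt_or_ge j (k+1) with h | h
      · have h1 : (S (k+1)).T ⊆ (S k).T := by rw [hSsucc k]; exact (spec k).2.1
        exact h1.trans (ih (Nat.lt_succ_iff.1 h))
      · have : j = k + 1 := le_antisymm hjk h
        subst this; exact le_refl _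
  have hEchain : ∀ j k, j ≤ k → (S k).E ⊆ (S j).E := by
    intro j k hjk
    induction k with
    | zero => cases Nat.le_zero.1 hjk; exact le_refl _
    | succ k ih =>
      rcases Nat.lt_or_ge j (k+1) with h | h
      · have h1 : (S (k+1)).E ⊆ (S k).E := by rw [hSsucc k]; exact (spec k).2.2.2.2.2.1
        exact h1.trans (ih (Nat.lt_succ_iff.1 h))
      · have : j = k + 1 := le_antisymm hjk h
        subst this; exact le_refl _
  have huT : ∀ k, u k ∈ (S k).T := fun k => (spec k).1
  have huM : ∀ k, u k ∈ M := fun k => (S k).hTM (huT k)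
  have huA : ∀ k, A k ∈ u k := fun k => (spec k).2.2.2.1
  have hnotin : ∀ k, u k ∉ (S (k+1)).T := by
    intro k; rw [hSsucc k]; exact (spec k).2.2.1
  have hAE : ∀ k, A k ∩ (S (k+1)).E = ∅ := by
    intro k; rw [hSsucc k]; exact (spec k).2.2.2.2.2.2
  have hAsubE : ∀ k, A k ⊆ (S k).E := fun k => (spec k).2.2.2.2.1
  have hdisj : ∀ j k, j < k → A j ∩ A k = ∅ := by
    intro j k hjk
    have h1 : A k ⊆ (S (j+1)).E := (hAsubE k).trans (hEchain (j+1) k hjk)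
    have := hAE j
    apply Set.eq_empty_of_subset_empty
    intro x hx
    rw [← this]
    exact ⟨hx.1, h1 hx.2⟩
  have hinj : Function.Injective u := by
    intro j k hjk
    by_contra hne
    rcases Nat.lt_or_ge j k with h | h
    · have : u k ∈ (S (j+1)).T := hTchain (j+1) k h (huT k)
      rw [← hjk] at this
      exact hnotin j this
    · have h' : k < j := lt_of_le_of_ne h (Ne.symm hne)
      have : u j ∈ (S (k+1)).T := hTchain (k+1) j h' (huT j)
      rw [hjk] at this
      exact hnotin k this
  refine ⟨u, A, hinj, huM, huA, ?_⟩
  intro j k hjk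
  rcases Nat.lt_or_ge j k with h | h
  · exact hdisj j k h
  · have h' : k < j := lt_of_le_of_ne h (Ne.symm hjk)
    rw [Set.inter_comm]
    exact hdisj k j h'

end Aux4

noncomputable section Aux5

open Cardinal

abbrev Iq := Finset ℚ × Finset (Finset ℚ)

def eI : Iq ≃ ℕ := Denumerable.eqv Iq

attribute [local instance] Classical.propDecidable

def Aset (r : ℝ) : Set Iq := {x | x.1.filter (fun a : ℚ => (a : ℝ) < r) ∈ x.2}

lemma indep_infinite (s t : Finset ℝ) (hst : ∀ r ∈ s, r ∉ t) :
    {x : Iq | (∀ r ∈ s, x ∈ Aset r) ∧ ∀ r ∈ t, x ∉ Aset r}.Infinite := by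
  classical
  set g : ℝ × ℝ → ℚ := fun pr =>
    if h : pr.1 < pr.2 then (exists_rat_btwn h).choose else 0 with hg
  set F0 : Finset ℚ := ((s ∪ t) ×ˢ (s ∪ t)).image g with hF0
  have key : ∀ F : Finset ℚ, F0 ⊆ F → ∀ r ∈ s ∪ t, ∀ r' ∈ s ∪ t, r ≠ r' →
      F.filter (fun a : ℚ => (a : ℝ) < r) ≠ F.filter (fun a : ℚ => (a : ℝ) < r') := by
    intro F hF r hr r' hr' hne
    rcases hne.lt_or_gt with h | h
    · -- r < r' : q ∈ filter r', ∉ filter r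
      have hq := (exists_rat_btwn h).choose_spec
      have hmem : g (r, r') ∈ F0 := by
        apply Finset.mem_image_of_mem
        exact Finset.mem_product.2 ⟨hr, hr'⟩
      have hgq : g (r, r') = (exists_rat_btwn h).choose := by
        simp only [hg, dif_pos h]
      intro heq
      have h1 : g (r, r') ∈ F.filter (fun a : ℚ => (a : ℝ) < r') := by
        refine Finset.mem_filter.2 ⟨hF hmem, ?_⟩
        rw [hgq]; exact hq.2
      rw [← heq] at h1
      have h2 := (Finset.mem_filter.1 h1).2
      rw [hgq] at h2
      exact absurd hq.1 (not_lt.2 h2.le)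
    · -- r' < r
      have hq := (exists_rat_btwn h).choose_spec
      have hmem : g (r', r) ∈ F0 := by
        apply Finset.mem_image_of_mem
        exact Finset.mem_product.2 ⟨hr', hr⟩
      have hgq : g (r', r) = (exists_rat_btwn h).choose := by
        simp only [hg, dif_pos h]
      intro heq
      have h1 : g (r', r) ∈ F.filter (fun a : ℚ => (a : ℝ) < r) := by
        refine Finset.mem_filter.2 ⟨hF hmem, ?_⟩
        rw [hgq]; exact hq.2
      rw [heq] at h1
      have h2 := (Finset.mem_filter.1 h1).2
      rw [hgq] at h2
      exact absurd hq.1 (not_lt.2 h2.le)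
  have memS : ∀ F : Finset ℚ, F0 ⊆ F →
      ((F, s.image fun r => F.filter (fun a : ℚ => (a : ℝ) < r)) : Iq) ∈
        {x : Iq | (∀ r ∈ s, x ∈ Aset r) ∧ ∀ r ∈ t, x ∉ Aset r} := by
    intro F hF
    constructor
    · intro r hr
      exact Finset.mem_image_of_mem (fun r => F.filter (fun a : ℚ => (a : ℝ) < r)) hr
    · intro r hr hmem
      obtain ⟨r', hr's, heq⟩ := Finset.mem_image.1 hmem
      have hne : r' ≠ r := fun h => (hst r' hr's) (h ▸ hr)
      exact key F hF r' (Finset.mem_union_left _ hr's) r (Finset.mem_union_right _ hr) hne heq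
  -- infinitude
  obtain ⟨B, hB⟩ := F0.finite_toSet.bddAbove
  set c : ℕ → ℚ := fun i => B + 1 + i with hc
  have hcinj : Function.Injective c := by
    intro i j hij
    simp only [hc] at hij
    have : (i : ℚ) = j := by linarith
    exact_mod_cast this
  have hcnot : ∀ i, c i ∉ F0 := by
    intro i hi
    have := hB hi
    simp only [hc] at this
    have : B + 1 + (i:ℚ) ≤ B := this
    have hi0 : (0:ℚ) ≤ i := Nat.cast_nonneg i
    linarith
  set Fk : ℕ → Finset ℚ := fun k => F0 ∪ (Finset.range (k+1)).image c with hFk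
  have hFksub : ∀ k, F0 ⊆ Fk k := fun k => Finset.subset_union_left
  have hFkcard : ∀ k, (Fk k).card = F0.card + (k+1) := by
    intro k
    rw [hFk]
    rw [Finset.card_union_of_disjoint]
    · rw [Finset.card_image_of_injective _ hcinj, Finset.card_range]
    · rw [Finset.disjoint_right]
      intro a ha
      obtain ⟨i, _, rfl⟩ := Finset.mem_image.1 ha
      exact hcnot i
  refine Set.infinite_of_injective_forall_mem
    (f := fun k : ℕ => ((Fk k, s.image fun r => (Fk k).filter (fun a : ℚ => (a : ℝ) < r)) : Iq))
    ?_ ?_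
  · intro j k hjk
    have : (Fk j).card = (Fk k).card := by rw [congrArg (fun x : Iq => x.1.card) hjk]
    rw [hFkcard j, hFkcard k] at this
    omega
  · intro k
    exact memS (Fk k) (hFksub k)

def Cset (h : ℝ → Bool) (r : ℝ) : Set Iq := if h r then Aset r else (Aset r)ᶜ

lemma biInter_Cset_infinite (h : ℝ → Bool) (s : Finset ℝ) :
    (⋂ r ∈ s, Cset h r).Infinite := by
  classical
  have := indep_infinite (s.filter fun r => h r = true) (s.filter fun r => h r = false)
    (by
      intro r hr hr'
      have h1 := (Finset.mem_filter.1 hr).2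
      have h2 := (Finset.mem_filter.1 hr').2
      rw [h1] at h2; simp at h2 )
  refine this.mono ?_
  rintro x ⟨h1, h2⟩
  apply Set.mem_biInter
  intro r hr
  by_cases hb : h r = true
  · have : x ∈ Aset r := h1 r (Finset.mem_filter.2 ⟨hr, hb⟩)
    simpa [Cset, hb] using this
  · have hb' : h r = false := by revert hb; cases h r <;> simp
    have : x ∉ Aset r := h2 r (Finset.mem_filter.2 ⟨hr, hb'⟩)
    simpa [Cset, hb'] using this

def Ffam (h : ℝ → Bool) : Filter Iq :=
  ⨅ (s : Finset ℝ), Filter.principal (⋂ r ∈ s, Cset h r)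

lemma Ffam_directed (h : ℝ → Bool) :
    Directed (· ≥ ·) fun s : Finset ℝ => Filter.principal (⋂ r ∈ s, Cset h r) := by
  intro s₁ s₂
  refine ⟨s₁ ∪ s₂, Filter.principal_mono.2 ?_, Filter.principal_mono.2 ?_⟩
  · intro x hx
    simp only [Set.mem_iInter] at hx ⊢
    intro r hr
    exact hx r (Finset.mem_union_left _ hr)
  · intro x hx
    simp only [Set.mem_iInter] at hx ⊢
    intro r hr
    exact hx r (Finset.mem_union_right _ hr)

lemma Ffam_inf_cofinite_neBot (h : ℝ → Bool) : Filter.NeBot (Ffam h ⊓ Filter.cofinite) := by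
  rw [Filter.inf_neBot_iff]
  intro U hU V hV
  obtain ⟨s, hs⟩ := (Filter.mem_iInf_of_directed (Ffam_directed h) U).1 hU
  have hsub : (⋂ r ∈ s, Cset h r) ⊆ U := hs
  have hinf : ((⋂ r ∈ s, Cset h r) ∩ V).Infinite := by
    have : ((⋂ r ∈ s, Cset h r) \ Vᶜ).Infinite :=
      (biInter_Cset_infinite h s).diff hV
    refine this.mono ?_
    intro x hx; exact ⟨hx.1, by simpa using hx.2⟩
  obtain ⟨x, hx⟩ := hinf.nonempty
  exact ⟨x, hsub hx.1, hx.2⟩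

lemma Cset_mem_Ffam (h : ℝ → Bool) (r : ℝ) : Cset h r ∈ Ffam h := by
  have : Ffam h ≤ Filter.principal (⋂ r' ∈ ({r} : Finset ℝ), Cset h r') := iInf_le _ _
  apply this
  simp

/-- the ultrafilter associated to `h` -/
def uOf (h : ℝ → Bool) : Ultrafilter Iq :=
  @Ultrafilter.of _ (Ffam h ⊓ Filter.cofinite) (Ffam_inf_cofinite_neBot h)

lemma uOf_mem (h : ℝ → Bool) (r : ℝ) : Cset h r ∈ uOf h := by
  have h1 : (uOf h : Filter Iq) ≤ Ffam h ⊓ Filter.cofinite :=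
    @Ultrafilter.of_le _ _ (Ffam_inf_cofinite_neBot h)
  exact h1 (Filter.mem_inf_of_left (Cset_mem_Ffam h r))

lemma uOf_cofinite (h : ℝ → Bool) : (uOf h : Filter Iq) ≤ Filter.cofinite :=
  le_trans (@Ultrafilter.of_le _ _ (Ffam_inf_cofinite_neBot h)) inf_le_right

lemma uOf_injective : Function.Injective uOf := by
  intro h1 h2 hne
  by_contra hdiff
  obtain ⟨r, hr⟩ : ∃ r, h1 r ≠ h2 r := by
    by_contra hc; push_neg at hc; exact hdiff (funext hc)
  have m1 := uOf_mem h1 r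
  have m2 := uOf_mem h2 r
  rw [hne] at m1
  rcases Bool.eq_false_or_eq_true (h1 r) with hb1 | hb1 <;>
    rcases Bool.eq_false_or_eq_true (h2 r) with hb2 | hb2
  · exact hr (by rw [hb1, hb2])
  · simp [Cset, hb1, hb2] at m1 m2
    exact (Ultrafilter.compl_mem_iff_notMem.1 m2) m1
  · simp [Cset, hb1, hb2] at m1 m2
    exact (Ultrafilter.compl_mem_iff_notMem.1 m1) m2
  · exact hr (by rw [hb1, hb2])

end Aux5

noncomputable section Aux6

open Cardinal

lemma exists_good_q :
    ∃ q : UF, (∀ n : ℕ, ({n} : Set ℕ) ∉ q) ∧ ∀ α, α < om1 → ¬ rkle q (Pfam α) := by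
  classical
  set Bad : Set (Ultrafilter Iq) :=
    {u | ∃ α, α < om1 ∧ ∃ f : ℕ → Iq, Ultrafilter.map f (Pfam α) = u} with hBadDef
  -- cardinality bound on Bad
  have hcover : Bad ⊆ ⋃ (i : om1.ToType),
      Set.range (fun f : ℕ → Iq =>
        Ultrafilter.map f (Pfam (((Ordinal.ToType.mk (o := om1)).symm i : ↥(Set.Iio om1)) : Ordinal))) := by
    rintro u ⟨α, hα, f, hf⟩
    apply Set.mem_iUnion.2
    refine ⟨(Ordinal.ToType.mk (o := om1)) ⟨α, hα⟩, ⟨f, ?_⟩⟩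
    rw [OrderIso.symm_apply_apply]
    exact hf
  have hBadCard : #Bad ≤ 𝔠 := by
    refine le_trans (Cardinal.mk_le_mk_of_subset hcover) ?_
    refine le_trans (Cardinal.mk_iUnion_le _) ?_
    have h1 : #om1.ToType = Cardinal.aleph 1 := by
      rw [Cardinal.mk_toType]
      show (Cardinal.aleph 1).ord.card = _
      rw [Cardinal.card_ord]
    have h2 : ∀ i : om1.ToType,
        #(Set.range (fun f : ℕ → Iq =>
          Ultrafilter.map f (Pfam (((Ordinal.ToType.mk (o := om1)).symm i : ↥(Set.Iio om1)) : Ordinal)))) ≤ 𝔠 := by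
      intro i
      refine le_trans (Cardinal.mk_range_le) ?_
      have : #(ℕ → Iq) = 2 ^ ℵ₀ := by
        rw [← Cardinal.power_def, Cardinal.mk_denumerable, Cardinal.mk_nat,
          Cardinal.power_self_eq le_rfl]
      rw [this, Cardinal.two_power_aleph0]
    refine le_trans (mul_le_mul' h1.le (ciSup_le' h2)) ?_
    have hm : (Cardinal.aleph 1) * 𝔠 ≤ 𝔠 * 𝔠 :=
      mul_le_mul' Cardinal.aleph_one_le_continuum (le_refl 𝔠)
    exact hm.trans (le_of_eq (Cardinal.mul_eq_self Cardinal.aleph0_le_continuum))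
  -- not all uOf h can be in Bad
  have hnotall : ∃ h : ℝ → Bool, uOf h ∉ Bad := by
    by_contra hc
    push_neg at hc
    have hinj : Function.Injective (fun h : ℝ → Bool => (⟨uOf h, hc h⟩ : ↥Bad)) := by
      intro h1 h2 he
      exact uOf_injective (congrArg Subtype.val he)
    have hle : #(ℝ → Bool) ≤ #Bad := Cardinal.mk_le_of_injective hinj
    have h3 : #(ℝ → Bool) = 2 ^ 𝔠 := by
      rw [← Cardinal.power_def, Cardinal.mk_bool, Cardinal.mk_real]
    rw [h3] at hle
    exact absurd (lt_of_lt_of_le (Cardinal.cantor 𝔠) (hle.trans hBadCard)) (lt_irrefl _)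
  obtain ⟨h, hBadh⟩ := hnotall
  refine ⟨Ultrafilter.map eI (uOf h), ?_, ?_⟩
  · intro n hn
    have : eI ⁻¹' {n} ∈ uOf h := hn
    have hfin : (eI ⁻¹' {n}).Finite := (Set.finite_singleton n).preimage (eI.injective.injOn)
    have := uOf_cofinite h (hfin.compl_mem_cofinite)
    exact (Ultrafilter.compl_mem_iff_notMem.1 this) hn
  · rintro α hα ⟨f, hf⟩
    apply hBadh
    refine ⟨α, hα, eI.symm ∘ f, ?_⟩
    have : Ultrafilter.map eI.symm (Ultrafilter.map f (Pfam α))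
        = Ultrafilter.map eI.symm (Ultrafilter.map eI (uOf h)) := by rw [hf]
    rw [Ultrafilter.map_map, Ultrafilter.map_map] at this
    have h2 : Ultrafilter.map (eI.symm ∘ eI) (uOf h) = uOf h := by
      have : (eI.symm ∘ eI) = id := by funext x; simp
      rw [this, Ultrafilter.map_id]
    rw [h2] at this
    exact this
end Aux6

noncomputable section Aux7

def Yset : Set UF := {v | (∃ n : ℕ, v = pure n) ∨ v ∉ Xset}

lemma pure_mem_Yset (n : ℕ) : (pure n : UF) ∈ Yset := Or.inl ⟨n, rfl⟩

lemma X_pcompact (x : ℕ → ↥Xset) :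
    ∃ l : ↥Xset, Filter.Tendsto x ((Filter.hyperfilter ℕ : UF) : Filter ℕ) (nhds l) :=
  ⟨⟨(Filter.hyperfilter ℕ : UF).bind (fun n => (x n : UF)),
      bind_mem_Xset _ (fun n => (x n).2)⟩,
    tendsto_subtype_rng.2 (tendsto_bind_nhds _ _)⟩

lemma Y_seqcompact (q : UF) (hq : ∀ α, α < om1 → ¬ rkle q (Pfam α))
    (M : Set ↥Yset) (hM : M.Infinite) :
    ∃ L : Set ↥Yset, L ⊆ M ∧ L.Infinite ∧
      ∀ x : ℕ → ↥Yset, Function.Injective x → (∀ n, x n ∈ L) → ∃ l : ↥Yset,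
        Filter.Tendsto x (q : Filter ℕ) (nhds l) := by
  classical
  have hM' : (Subtype.val '' M).Infinite :=
    hM.image (Subtype.val_injective.injOn)
  obtain ⟨u, A, huinj, huM, huA, hdisj⟩ := disjointify hM'
  set L : Set ↥Yset := {y ∈ M | ∃ k, (y : UF) = u k} with hL
  have hLM : L ⊆ M := fun y hy => hy.1
  have hwit : ∀ k, ∃ y : ↥Yset, y ∈ M ∧ (y : UF) = u k := by
    intro k
    obtain ⟨y, hyM, hyv⟩ := huM k
    exact ⟨y, hyM, hyv⟩
  choose w hwM hwv using hwit
  have hLinf : L.Infinite := by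
    refine Set.infinite_of_injective_forall_mem (f := w) ?_ ?_
    · intro j k hjk; apply huinj; rw [← hwv j, ← hwv k, hjk]
    · intro k; exact ⟨hwM k, k, hwv k⟩
  refine ⟨L, hLM, hLinf, ?_⟩
  intro x hxinj hxL
  have hsig : ∀ n, ∃ k, ((x n : UF)) = u k := fun n => (hxL n).2
  choose σ hσ using hsig
  have hσinj : Function.Injective σ := by
    intro n m hnm; apply hxinj; apply Subtype.val_injective; rw [hσ n, hσ m, hnm]
  set w' : ℕ → UF := fun n => (x n : UF) with hw'
  set l₀ : UF := q.bind w' with hl₀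
  set f : ℕ → ℕ := fun j => if h : ∃ n, j ∈ A (σ n) then h.choose else 0 with hfdef
  have hf : ∀ n j, j ∈ A (σ n) → f j = n := by
    intro n j hj
    have hex : ∃ n', j ∈ A (σ n') := ⟨n, hj⟩
    have hch := hex.choose_spec
    have heq : hex.choose = n := by
      apply hσinj
      by_contra hne
      have h0 := hdisj _ _ hne
      have : j ∈ A (σ hex.choose) ∩ A (σ n) := ⟨hch, hj⟩
      rw [h0] at this
      exact absurd this (Set.notMem_empty j)
    simp only [hfdef, dif_pos hex]
    exact heq
  have hmapf : Ultrafilter.map f l₀ = q := by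
    have hle : (Ultrafilter.map f l₀ : Filter ℕ) ≤ (q : Filter ℕ) := by
      intro B hB
      show f ⁻¹' B ∈ l₀
      show {n | f ⁻¹' B ∈ w' n} ∈ q
      refine Filter.mem_of_superset hB ?_
      intro n hn
      have hA : A (σ n) ∈ w' n := by
        rw [show w' n = u (σ n) from hσ n]; exact huA (σ n)
      refine Filter.mem_of_superset hA ?_
      intro j hj
      show f j ∈ B
      rw [hf n j hj]; exact hn
    exact Ultrafilter.coe_le_coe.1 hle
  have hl₀Y : l₀ ∈ Yset := by
    refine Or.inr ?_
    rintro ⟨α, hα, hrk⟩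
    exact hq α hα (rkle_trans ⟨f, hmapf⟩ hrk)
  exact ⟨⟨l₀, hl₀Y⟩, tendsto_subtype_rng.2 (tendsto_bind_nhds q w')⟩

lemma exists_unbounded :
    ∃ F : ↥Xset × ↥Yset → ℝ, Continuous F ∧ ∀ C : ℝ, ∃ z, C < |F z| := by
  classical
  set F : ↥Xset × ↥Yset → ℝ := fun z =>
    if h : ∃ n : ℕ, (z.1 : UF) = pure n ∧ (z.2 : UF) = pure n then (h.choose : ℝ) else 0
    with hFdef
  have hval : ∀ (n : ℕ) (z : ↥Xset × ↥Yset),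
      (z.1 : UF) = pure n → (z.2 : UF) = pure n → F z = n := by
    intro n z h1 h2
    have hex : ∃ m : ℕ, (z.1 : UF) = pure m ∧ (z.2 : UF) = pure m := ⟨n, h1, h2⟩
    have hch := hex.choose_spec
    have : (pure hex.choose : UF) = pure n := by rw [← hch.1, h1]
    have hcn : hex.choose = n := Ultrafilter.pure_injective this
    simp only [hFdef, dif_pos hex, hcn]
  have hzero : ∀ (z : ↥Xset × ↥Yset),
      ¬(∃ n : ℕ, (z.1 : UF) = pure n ∧ (z.2 : UF) = pure n) → F z = 0 := by
    intro z hz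
    simp only [hFdef, dif_neg hz]
  refine ⟨F, ?_, ?_⟩
  · rw [continuous_iff_continuousAt]
    intro z
    by_cases hv : (z.1 : UF) = (z.2 : UF)
    · -- the common value must be pure n
      have hy := z.2.2
      rcases hy with ⟨n, hpure⟩ | hnot
      · -- neighborhood of pures
        set O : Set (↥Xset × ↥Yset) :=
          (Subtype.val ⁻¹' {u : UF | {n} ∈ u}) ×ˢ (Subtype.val ⁻¹' {u : UF | {n} ∈ u}) with hO
        have hOopen : IsOpen O :=
          ((ultrafilter_isOpen_basic {n}).preimage continuous_subtype_val).prod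
            ((ultrafilter_isOpen_basic {n}).preimage continuous_subtype_val)
        have hzO : z ∈ O := by
          constructor
          · show {n} ∈ (z.1 : UF)
            rw [hv, hpure]; exact Ultrafilter.mem_pure.2 rfl
          · show {n} ∈ (z.2 : UF)
            rw [hpure]; exact Ultrafilter.mem_pure.2 rfl
        have hconst : ∀ z' ∈ O, F z' = n := by
          intro z' hz'
          have h1 : (z'.1 : UF) = pure n := by
            obtain ⟨m, hm, he⟩ :=
              Ultrafilter.eq_pure_of_finite_mem (Set.finite_singleton n) hz'.1
            rwa [Set.mem_singleton_iff.1 hm] at he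
          have h2 : (z'.2 : UF) = pure n := by
            obtain ⟨m, hm, he⟩ :=
              Ultrafilter.eq_pure_of_finite_mem (Set.finite_singleton n) hz'.2
            rwa [Set.mem_singleton_iff.1 hm] at he
          exact hval n z' h1 h2
        refine ContinuousAt.congr (continuousAt_const (y := (n : ℝ))) ?_
        filter_upwards [hOopen.mem_nhds hzO] with z' hz'
        exact (hconst z' hz').symm
      · exact absurd (hv ▸ z.1.2) hnot
    · -- separate
      have hsep : ∃ B : Set ℕ, B ∈ (z.1 : UF) ∧ B ∉ (z.2 : UF) := by
        by_contra h
        push_neg at h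
        have : ((z.2 : UF) : Filter ℕ) ≤ ((z.1 : UF) : Filter ℕ) := fun s hs => h s hs
        exact hv (Ultrafilter.coe_le_coe.1 this).symm
      obtain ⟨B, hB1, hB2⟩ := hsep
      set O : Set (↥Xset × ↥Yset) :=
        (Subtype.val ⁻¹' {u : UF | B ∈ u}) ×ˢ (Subtype.val ⁻¹' {u : UF | Bᶜ ∈ u}) with hO
      have hOopen : IsOpen O :=
        ((ultrafilter_isOpen_basic B).preimage continuous_subtype_val).prod
          ((ultrafilter_isOpen_basic Bᶜ).preimage continuous_subtype_val)
      have hzO : z ∈ O := ⟨hB1, Ultrafilter.compl_mem_iff_notMem.2 hB2⟩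
      have hconst : ∀ z' ∈ O, F z' = 0 := by
        intro z' hz'
        apply hzero
        rintro ⟨n, h1, h2⟩
        have hn1 : n ∈ B := by
          have hb : B ∈ (z'.1 : UF) := hz'.1
          rw [h1] at hb; exact Ultrafilter.mem_pure.1 hb
        have hn2 : n ∈ Bᶜ := by
          have hb : Bᶜ ∈ (z'.2 : UF) := hz'.2
          rw [h2] at hb; exact Ultrafilter.mem_pure.1 hb
        exact hn2 hn1
      refine ContinuousAt.congr (continuousAt_const (y := (0 : ℝ))) ?_
      filter_upwards [hOopen.mem_nhds hzO] with z' hz'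
      exact (hconst z' hz').symm
  · intro C
    obtain ⟨n, hn⟩ := exists_nat_gt C
    set z : ↥Xset × ↥Yset :=
      (⟨pure n, pure_mem_Xset n⟩, ⟨pure n, pure_mem_Yset n⟩) with hz
    refine ⟨z, ?_⟩
    have : F z = n := hval n z rfl rfl
    rw [this]
    exact lt_of_lt_of_le hn (le_abs_self _)

end Aux7

noncomputable section Aux8

def phi : Ultrafilter ℕ → StoneCech ℕ := Ultrafilter.extend stoneCechUnit

lemma phi_continuous : Continuous phi := continuous_ultrafilter_extend _

lemma phi_pure (n : ℕ) : phi (pure n) = stoneCechUnit n :=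
  congrFun (ultrafilter_extend_extends (stoneCechUnit : ℕ → StoneCech ℕ)) n

lemma phi_injective : Function.Injective phi := by
  classical
  intro u v huv
  by_contra hne
  have hsep : ∃ B : Set ℕ, B ∈ u ∧ B ∉ v := by
    by_contra h
    push_neg at h
    have : (v : Filter ℕ) ≤ (u : Filter ℕ) := fun s hs => h s hs
    exact hne (Ultrafilter.coe_le_coe.1 this).symm
  obtain ⟨B, hBu, hBv⟩ := hsep
  set g : ℕ → Bool := fun n => decide (n ∈ B) with hg
  have hgcont : Continuous g := continuous_of_discreteTopology
  set ψ : StoneCech ℕ → Bool := stoneCechExtend hgcont with hψ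
  have hcomp : ψ ∘ phi = Ultrafilter.extend g := by
    refine Continuous.ext_on denseRange_pure
      ((continuous_stoneCechExtend hgcont).comp phi_continuous)
      (continuous_ultrafilter_extend g) ?_
    rintro _ ⟨n, rfl⟩
    show ψ (phi (pure n)) = Ultrafilter.extend g (pure n)
    rw [phi_pure n]
    have h1 : Ultrafilter.extend g (pure n) = g n :=
      congrFun (ultrafilter_extend_extends g) n
    have h2 : ψ (stoneCechUnit n) = g n := congrFun (stoneCechExtend_extends hgcont) n
    rw [h1, h2]
  have hpre : g ⁻¹' {true} = B := by
    ext n; simp [hg]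
  have hBc : g ⁻¹' {false} = Bᶜ := by
    ext n; simp [hg]
  have hu : Ultrafilter.extend g u = true := by
    rw [ultrafilter_extend_eq_iff]
    rw [nhds_discrete]
    rw [Filter.le_pure_iff]
    show {true} ∈ Ultrafilter.map g u
    show g ⁻¹' {true} ∈ u
    rw [hpre]; exact hBu
  have hv2 : Ultrafilter.extend g v = false := by
    rw [ultrafilter_extend_eq_iff]
    rw [nhds_discrete]
    rw [Filter.le_pure_iff]
    show {false} ∈ Ultrafilter.map g v
    show g ⁻¹' {false} ∈ v
    rw [hBc]; exact Ultrafilter.compl_mem_iff_notMem.2 hBv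
  have : Ultrafilter.extend g u = Ultrafilter.extend g v := by
    rw [← hcomp]; show ψ (phi u) = ψ (phi v); rw [huv]
  rw [hu, hv2] at this
  exact Bool.noConfusion this

lemma phi_surjective : Function.Surjective phi := by
  have hcr : IsClosed (Set.range phi) := (isCompact_range phi_continuous).isClosed
  have hdense : Dense (Set.range phi) := by
    have h1 : Set.range (stoneCechUnit : ℕ → StoneCech ℕ) ⊆ Set.range phi := by
      rintro _ ⟨n, rfl⟩; exact ⟨pure n, phi_pure n⟩
    exact denseRange_stoneCechUnit.mono h1
  intro y
  have : Set.range phi = Set.univ := by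
    rw [← hcr.closure_eq, hdense.closure_eq]
  rw [Set.eq_univ_iff_forall] at this
  exact this y

def PhiH : Ultrafilter ℕ ≃ₜ StoneCech ℕ :=
  Continuous.homeoOfEquivCompactToT2
    (f := Equiv.ofBijective phi ⟨phi_injective, phi_surjective⟩) phi_continuous

lemma PhiH_apply (u : Ultrafilter ℕ) : PhiH u = phi u := rfl

end Aux8

noncomputable section Transfer

lemma pcompact_transfer {A B : Type*} [TopologicalSpace A] [TopologicalSpace B]
    (e : A ≃ₜ B) (p : Ultrafilter ℕ) (h : PCompact p A) : PCompact p B := by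
  intro x
  obtain ⟨l, hl⟩ := h (fun n => e.symm (x n))
  refine ⟨e l, ?_⟩
  have h2 := (e.continuous.tendsto l).comp hl
  have h3 : (⇑e ∘ fun n => e.symm (x n)) = x := by
    funext n; simp
  show Filter.Tendsto x (↑p) (𝓝 (e l))
  rw [← h3]; exact h2

lemma seqpcompact_transfer {A B : Type*} [TopologicalSpace A] [TopologicalSpace B]
    (e : A ≃ₜ B) (q : Ultrafilter ℕ) (h : SeqPCompact q A) : SeqPCompact q B := by
  intro M hM
  have hM' : (e.symm '' M).Infinite := hM.image (e.symm.injective.injOn)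
  obtain ⟨L', hL'M, hL'inf, hL'⟩ := h (e.symm '' M) hM'
  refine ⟨e '' L', ?_, hL'inf.image (e.injective.injOn), ?_⟩
  · rintro _ ⟨y, hy, rfl⟩
    obtain ⟨m, hm, hme⟩ := hL'M hy
    have : e y = m := by rw [← hme]; simp
    rw [this]; exact hm
  · intro x hxinj hxL
    have hx' : ∀ n, e.symm (x n) ∈ L' := by
      intro n
      obtain ⟨y, hy, hye⟩ := hxL n
      rw [← hye]; simpa using hy
    obtain ⟨l, hl⟩ := hL' (fun n => e.symm (x n))
      (fun a b hab => hxinj (by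
        have := congrArg e hab; simpa using this)) hx'
    refine ⟨e l, ?_⟩
    have h2 := (e.continuous.tendsto l).comp hl
    have h3 : (⇑e ∘ fun n => e.symm (x n)) = x := by
      funext n; simp
    show Filter.Tendsto x (↑q) (𝓝 (e l))
    rw [← h3]; exact h2

lemma pseudo_transfer {A B : Type*} [TopologicalSpace A] [TopologicalSpace B]
    (e : A ≃ₜ B) (h : Pseudocompact B) : Pseudocompact A := by
  intro f hf
  obtain ⟨C, hC⟩ := h (f ∘ e.symm) (hf.comp e.symm.continuous)
  exact ⟨C, fun y => by simpa using hC (e y)⟩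

end Transfer

/-- There are free ultrafilters `p, q` and subspaces `X, Y` of βℕ such that `X`
is `p`-compact, `Y` is sequentially `q`-compact, and `X × Y` is not pseudocompact. -/
theorem stmt_14 :
    ∃ (p q : Ultrafilter ℕ) (X Y : Set (StoneCech ℕ)),
      FreeUF p ∧ FreeUF q ∧
      PCompact p ↥X ∧ SeqPCompact q ↥Y ∧
      ¬ Pseudocompact (↥X × ↥Y) := by
  classical
  obtain ⟨q, hqfree, hq⟩ := exists_good_q
  refine ⟨(Filter.hyperfilter ℕ : Ultrafilter ℕ), q, PhiH '' Xset, PhiH '' Yset,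
    hyper_free, hqfree, ?_, ?_, ?_⟩
  · exact pcompact_transfer (PhiH.image Xset) _ (fun x => X_pcompact x)
  · exact seqpcompact_transfer (PhiH.image Yset) q (fun M hM => Y_seqcompact q hq M hM)
  · intro hP
    have hP' : Pseudocompact (↥Xset × ↥Yset) :=
      pseudo_transfer (Homeomorph.prodCongr (PhiH.image Xset) (PhiH.image Yset)) hP
    obtain ⟨F, hFc, hFun⟩ := exists_unbounded
    obtain ⟨C, hC⟩ := hP' F hFc
    obtain ⟨z, hz⟩ := hFun C
    exact absurd (hC z) (not_le.2 hz)
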